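/- Suppose f is C² on a neighbourhood of x(0), x is twice differentiable at 0 from the right along the pathway, the natural pathway equation f(x(t)) = (1−t) • f(x(0)) holds for all t ∈ [0,1], and J := f′(x(0)) is a continuous linear isomorphism from E onto F. Fix ε ∈ ℝ and define the order-n correction c_n := (εⁿ/n!) • x⁽ⁿ⁾(0). Then f″(x(0))[c₁,c₁] + 2 • J(c₂) = 0, and hence c₂ = −(1/2) • J⁻¹( f″(x(0))[c₁,c₁] ); in particular this expression for c₂ is independent of the choice of parameterisation scale ε once c₁ is given. -/

import Mathlib

open Topology

/-- Finite-step correction identity at second order: with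
`c_n := (εⁿ/n!) • x⁽ⁿ⁾(0)` (derivatives taken from the right along the pathway),
`f″(x 0)[c₁,c₁] + 2 • J c₂ = 0`, hence `c₂ = -(1/2) • J⁻¹ (f″(x 0)[c₁,c₁])`. -/
theorem correction_second_order
    {E F : Type*} [NormedAddCommGroup E] [NormedSpace ℝ E] [CompleteSpace E]
    [NormedAddCommGroup F] [NormedSpace ℝ F] [CompleteSpace F]
    (f : E → F) (x : ℝ → E)
    (hf : ContDiffAt ℝ 2 f (x 0))
    (hx1 : ∀ᶠ s in 𝓝[≥] (0 : ℝ), DifferentiableWithinAt ℝ x (Set.Ici 0) s)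
    (hx2 : DifferentiableWithinAt ℝ (derivWithin x (Set.Ici 0)) (Set.Ici 0) 0)
    (hpath : ∀ t ∈ Set.Icc (0 : ℝ) 1, f (x t) = (1 - t) • f (x 0))
    (J : E ≃L[ℝ] F) (hJ : (J : E →L[ℝ] F) = fderiv ℝ f (x 0))
    (ε : ℝ) (c₁ c₂ : E)
    (hc₁ : c₁ = ε • derivWithin x (Set.Ici 0) 0)
    (hc₂ : c₂ = (ε ^ 2 / 2) • iteratedDerivWithin 2 x (Set.Ici 0) 0) :
    iteratedFDeriv ℝ 2 f (x 0) ![c₁, c₁] + (2 : ℝ) • J c₂ = 0 ∧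
    c₂ = -(1 / 2 : ℝ) • J.symm (iteratedFDeriv ℝ 2 f (x 0) ![c₁, c₁]) := by
  have hU : UniqueDiffOn ℝ (Set.Ici (0:ℝ)) := uniqueDiffOn_Ici 0
  have h0s : (0:ℝ) ∈ Set.Ici (0:ℝ) := Set.self_mem_Ici
  set v := derivWithin x (Set.Ici 0) 0 with hv
  set w := derivWithin (derivWithin x (Set.Ici 0)) (Set.Ici 0) 0 with hw
  have hw2 : iteratedDerivWithin 2 x (Set.Ici 0) 0 = w := by
    rw [show (2:ℕ) = 1 + 1 from rfl, iteratedDerivWithin_succ',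
      iteratedDerivWithin_one]
  have hx10 : DifferentiableWithinAt ℝ x (Set.Ici 0) 0 := hx1.self_of_nhdsWithin h0s
  -- f is differentiable near x 0
  have hfd : ∀ᶠ y in 𝓝 (x 0), DifferentiableAt ℝ f y := by
    filter_upwards [hf.eventually (by norm_num)] with y hy
    exact hy.differentiableAt (by norm_num)
  have hcont : Filter.Tendsto x (𝓝[≥] (0:ℝ)) (𝓝 (x 0)) :=
    hx10.continuousWithinAt
  have hev1 : ∀ᶠ t in 𝓝[≥] (0:ℝ), DifferentiableAt ℝ f (x t) := hcont.eventually hfd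
  have hev2 : ∀ᶠ t in 𝓝[≥] (0:ℝ), t < 1 :=
    nhdsWithin_le_nhds (eventually_lt_nhds one_pos)
  -- the key pointwise identity along the pathway
  have key : ∀ᶠ t in 𝓝[≥] (0:ℝ),
      (fderiv ℝ f (x t)) (derivWithin x (Set.Ici 0) t) = -(f (x 0)) := by
    filter_upwards [hx1, hev1, hev2, self_mem_nhdsWithin] with t hxt hft ht1 hts
    have hts' : (0:ℝ) ≤ t := hts
    have hg1 : HasDerivWithinAt (fun u => f (x u))
        ((fderiv ℝ f (x t)) (derivWithin x (Set.Ici 0) t)) (Set.Ici 0) t :=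
      hft.hasFDerivAt.comp_hasDerivWithinAt t hxt.hasDerivWithinAt
    have hk : HasDerivWithinAt (fun u : ℝ => (1 - u) • f (x 0))
        (-(f (x 0))) (Set.Ici 0) t := by
      have := (((hasDerivAt_id t).const_sub (1:ℝ)).smul_const (f (x 0))).hasDerivWithinAt
        (s := Set.Ici 0)
      simpa using this
    have heq : (fun u => f (x u)) =ᶠ[𝓝[Set.Ici 0] t] (fun u : ℝ => (1 - u) • f (x 0)) := by
      have hIio : Set.Iio (1:ℝ) ∈ 𝓝[Set.Ici 0] t :=
        nhdsWithin_le_nhds (Iio_mem_nhds ht1)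
      filter_upwards [hIio, self_mem_nhdsWithin] with u hu1 hu0
      exact hpath u ⟨hu0, le_of_lt hu1⟩
    have hg2 : HasDerivWithinAt (fun u => f (x u)) (-(f (x 0))) (Set.Ici 0) t :=
      hk.congr_of_eventuallyEq heq (hpath t ⟨hts', le_of_lt ht1⟩)
    have := hg1.derivWithin (hU t hts)
    rw [← this, hg2.derivWithin (hU t hts)]
  -- derivative of t ↦ f'(x t) (x'(t)) at 0 within Ici 0
  have hφ : HasFDerivAt (fderiv ℝ f) (fderiv ℝ (fderiv ℝ f) (x 0)) (x 0) := by
    have h1 : ContDiffAt ℝ 1 (fderiv ℝ f) (x 0) := hf.fderiv_right (le_refl 2)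
    exact (h1.differentiableAt one_ne_zero).hasFDerivAt
  have hc : HasDerivWithinAt (fun t => fderiv ℝ f (x t))
      (fderiv ℝ (fderiv ℝ f) (x 0) v) (Set.Ici 0) 0 :=
    hφ.comp_hasDerivWithinAt 0 hx10.hasDerivWithinAt
  have hu : HasDerivWithinAt (derivWithin x (Set.Ici 0)) w (Set.Ici 0) 0 :=
    hx2.hasDerivWithinAt
  have hclm : HasDerivWithinAt
      (fun t => (fderiv ℝ f (x t)) (derivWithin x (Set.Ici 0) t))
      ((fderiv ℝ (fderiv ℝ f) (x 0) v) v + (fderiv ℝ f (x 0)) w) (Set.Ici 0) 0 :=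
    hc.clm_apply hu
  have hconst : HasDerivWithinAt
      (fun t => (fderiv ℝ f (x t)) (derivWithin x (Set.Ici 0) t)) 0 (Set.Ici 0) 0 := by
    have h0 : (fderiv ℝ f (x 0)) (derivWithin x (Set.Ici 0) 0) = -(f (x 0)) :=
      key.self_of_nhdsWithin h0s
    exact (hasDerivWithinAt_const (0:ℝ) (Set.Ici 0) (-(f (x 0)))).congr_of_eventuallyEq
      key h0
  have main : (fderiv ℝ (fderiv ℝ f) (x 0) v) v + (fderiv ℝ f (x 0)) w = 0 := by
    have := hclm.derivWithin (hU 0 h0s)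
    rw [← this, hconst.derivWithin (hU 0 h0s)]
  -- algebra
  have hJapp : ∀ e : E, J e = fderiv ℝ f (x 0) e := fun e => by
    rw [← hJ]; rfl
  have hA : iteratedFDeriv ℝ 2 f (x 0) ![c₁, c₁]
      = (ε ^ 2) • (fderiv ℝ (fderiv ℝ f) (x 0) v) v := by
    rw [iteratedFDeriv_two_apply]
    simp only [Matrix.cons_val_zero, Matrix.cons_val_one, Matrix.head_cons, hc₁, map_smul,
      ContinuousLinearMap.smul_apply, smul_smul]
    ring_nf
  have hJc₂ : J c₂ = (ε ^ 2 / 2) • (fderiv ℝ f (x 0)) w := by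
    rw [hJapp, hc₂, hw2, map_smul]
  have goal1 : iteratedFDeriv ℝ 2 f (x 0) ![c₁, c₁] + (2 : ℝ) • J c₂ = 0 := by
    rw [hA, hJc₂, smul_smul]
    have : (2:ℝ) * (ε ^ 2 / 2) = ε ^ 2 := by ring
    rw [this, ← smul_add, main, smul_zero]
  refine ⟨goal1, ?_⟩
  have h2 : iteratedFDeriv ℝ 2 f (x 0) ![c₁, c₁] = -((2:ℝ) • J c₂) :=
    eq_neg_of_add_eq_zero_left goal1
  rw [h2, map_neg, map_smul, J.symm_apply_apply, smul_neg, neg_smul, neg_neg, smul_smul]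
  norm_num
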